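/- Let (γ_n)_{n≥0} be a sequence of real numbers, let T : ℝ[x] → ℝ[x] be the linear operator determined by T[H_n] = γ_n H_n for every n, and let (Q_k)_{k≥0} be the differential coefficients of T. Then for each n ∈ ℕ₀, the following identity holds in ℂ[x] (where ι : ℝ[x] → ℂ[x] is the coefficientwise inclusion): ι(Q_n)(x) = (1/(n! 2^n)) Σ_{k=0}^{n} C(n,k) γ_k · i^{n−k} · ι(H_{n−k})(i x) · ι(H_k)(x), where ι(H_{n−k})(i x) denotes the composition of the complex polynomial ι(H_{n−k}) with the polynomial i·x. -/

import Mathlib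

open Polynomial Finset

noncomputable section

/-- The physicists' Hermite polynomials. -/
def hermitePoly (n : ℕ) : Polynomial ℝ :=
  ∑ k ∈ Finset.range (n / 2 + 1),
    Polynomial.C ((-1 : ℝ) ^ k * n.factorial * 2 ^ (n - 2 * k) /
      (k.factorial * (n - 2 * k).factorial)) * Polynomial.X ^ (n - 2 * k)

/-- The Laguerre polynomials. -/
def laguerrePoly (n : ℕ) : Polynomial ℝ :=
  ∑ k ∈ Finset.range (n + 1),
    Polynomial.C ((-1 : ℝ) ^ k / k.factorial * n.choose k) * Polynomial.X ^ k

/-- A real polynomial is hyperbolic if all of its complex roots are real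
(the zero polynomial counts as hyperbolic). -/
def Hyperbolic (p : Polynomial ℝ) : Prop :=
  p = 0 ∨ ∀ z : ℂ, Polynomial.aeval z p = 0 → z.im = 0

/-- A linear operator on ℝ[x] preserves hyperbolicity. -/
def HypPreserving (T : Polynomial ℝ →ₗ[ℝ] Polynomial ℝ) : Prop :=
  ∀ p : Polynomial ℝ, Hyperbolic p → Hyperbolic (T p)

/-- Classical multiplier sequence. -/
def ClassicalMS (γ : ℕ → ℝ) : Prop :=
  ∃ T : Polynomial ℝ →ₗ[ℝ] Polynomial ℝ,
    (∀ n, T (Polynomial.X ^ n) = γ n • Polynomial.X ^ n) ∧ HypPreserving T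

/-- Hermite multiplier sequence. -/
def HermiteMS (γ : ℕ → ℝ) : Prop :=
  ∃ T : Polynomial ℝ →ₗ[ℝ] Polynomial ℝ,
    (∀ n, T (hermitePoly n) = γ n • hermitePoly n) ∧ HypPreserving T

/-- Laguerre multiplier sequence. -/
def LaguerreMS (γ : ℕ → ℝ) : Prop :=
  ∃ T : Polynomial ℝ →ₗ[ℝ] Polynomial ℝ,
    (∀ n, T (laguerrePoly n) = γ n • laguerrePoly n) ∧ HypPreserving T

/-- A sequence is trivial if all entries vanish except possibly two at consecutive indices. -/
def TrivialSeq (γ : ℕ → ℝ) : Prop :=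
  ∃ m : ℕ, ∀ n, n ≠ m → n ≠ m + 1 → γ n = 0

lemma coeff_hermitePoly (n m : ℕ) : (hermitePoly n).coeff m =
    if m ≤ n ∧ (n - m) % 2 = 0 then
      (-1 : ℝ) ^ ((n - m)/2) * n.factorial * 2 ^ m / (((n - m)/2).factorial * m.factorial)
    else 0 := by
  rw [hermitePoly, finset_sum_coeff]
  simp only [coeff_C_mul, coeff_X_pow]
  split_ifs with h
  · obtain ⟨h1, h2⟩ := h
    rw [Finset.sum_eq_single ((n - m)/2)]
    · have he : n - 2 * ((n - m)/2) = m := by omega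
      rw [he, if_pos rfl, mul_one]
    · intro b hb hne
      rw [Finset.mem_range] at hb
      rw [if_neg (by omega), mul_zero]
    · intro hmem
      exfalso; apply hmem; rw [Finset.mem_range]; omega
  · apply Finset.sum_eq_zero
    intro b hb
    rw [Finset.mem_range] at hb
    rw [if_neg (by omega), mul_zero]

lemma hermitePoly_zero : hermitePoly 0 = 1 := by
  simp [hermitePoly]

lemma coeff_hermitePoly_self (n : ℕ) : (hermitePoly n).coeff n = 2 ^ n := by
  rw [coeff_hermitePoly, if_pos ⟨le_refl n, by omega⟩]
  simp
  field_simp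

lemma natDegree_hermitePoly (n : ℕ) : (hermitePoly n).natDegree = n := by
  apply le_antisymm
  · apply Polynomial.natDegree_le_iff_coeff_eq_zero.mpr
    intro m hm
    rw [coeff_hermitePoly, if_neg (by omega)]
  · apply Polynomial.le_natDegree_of_ne_zero
    rw [coeff_hermitePoly_self]
    positivity

lemma hermitePoly_rec (n : ℕ) :
    hermitePoly (n+1) = C 2 * X * hermitePoly n - derivative (hermitePoly n) := by
  have fne : ∀ k : ℕ, ((k.factorial : ℝ)) ≠ 0 := fun k => by
    exact_mod_cast Nat.cast_ne_zero.mpr k.factorial_ne_zero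
  ext M
  rcases M with _ | m
  · -- coefficient 0
    rw [coeff_sub, coeff_derivative, mul_assoc, coeff_C_mul, coeff_X_mul_zero, mul_zero,
      coeff_hermitePoly, coeff_hermitePoly]
    by_cases hp : (n + 1) % 2 = 0
    · obtain ⟨i, rfl⟩ : ∃ i, n = 2 * i + 1 := ⟨n / 2, by omega⟩
      rw [if_pos ⟨by omega, by omega⟩, if_pos ⟨by omega, by omega⟩]
      simp only [show (2 * i + 1 + 1 - 0) / 2 = i + 1 from by omega,
        show (2 * i + 1 - 1) / 2 = i from by omega,
        show 2 * i + 1 + 1 = (2 * i + 1) + 1 from rfl, Nat.factorial_succ (2 * i + 1),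
        Nat.factorial_succ i]
      push_cast
      field_simp
      ring
    · rw [if_neg (by omega), if_neg (by omega)]
      norm_num
  · -- coefficient m + 1
    rw [coeff_sub, coeff_derivative, mul_assoc, coeff_C_mul, coeff_X_mul,
      coeff_hermitePoly, coeff_hermitePoly, coeff_hermitePoly]
    by_cases hc : m ≤ n ∧ (n - m) % 2 = 0
    · by_cases hn : m = n
      · subst hn
        rw [if_pos ⟨by omega, by omega⟩, if_pos ⟨by omega, by omega⟩, if_neg (by omega)]
        simp only [show (m + 1 - (m + 1)) / 2 = 0 from by omega,
          show (m - m) / 2 = 0 from by omega, Nat.factorial_succ m, Nat.factorial_zero]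
        push_cast
        field_simp
        ring
      · obtain ⟨i, rfl⟩ : ∃ i, n = m + 2 * i + 2 := ⟨(n - m) / 2 - 1, by omega⟩
        rw [if_pos ⟨by omega, by omega⟩, if_pos ⟨by omega, by omega⟩,
          if_pos ⟨by omega, by omega⟩]
        simp only [show (m + 2 * i + 2 + 1 - (m + 1)) / 2 = i + 1 from by omega,
          show (m + 2 * i + 2 - m) / 2 = i + 1 from by omega,
          show (m + 2 * i + 2 - (m + 1 + 1)) / 2 = i from by omega,
          show m + 2 * i + 2 + 1 = (m + 2 * i + 2) + 1 from rfl,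
          Nat.factorial_succ (m + 2 * i + 2), Nat.factorial_succ i,
          Nat.factorial_succ (m + 1), Nat.factorial_succ m]
        push_cast
        field_simp
        ring
    · rw [if_neg (by omega), if_neg (by omega), if_neg (by omega)]
      norm_num

lemma derivative_hermitePoly (n : ℕ) :
    derivative (hermitePoly (n + 1)) = C (2 * (n + 1) : ℝ) * hermitePoly n := by
  induction n with
  | zero =>
      simp [hermitePoly_rec 0, hermitePoly_zero]
  | succ n ih =>
      rw [hermitePoly_rec (n+1), derivative_sub, derivative_mul, derivative_mul,
        derivative_C, derivative_X, ih, derivative_C_mul]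
      push_cast
      rw [show (2 * ((n:ℝ) + 1 + 1)) = 2 + 2 * ((n:ℝ) + 1) from by ring, C_add, add_mul,
        hermitePoly_rec n]
      ring

lemma iterDeriv_hermitePoly (n k : ℕ) (hk : k ≤ n) :
    derivative^[k] (hermitePoly n) =
      C ((2 ^ k * k.factorial * n.choose k : ℕ) : ℝ) * hermitePoly (n - k) := by
  induction k with
  | zero => simp
  | succ k ih =>
      rw [Function.iterate_succ_apply', ih (by omega), derivative_C_mul]
      obtain ⟨j, hj⟩ : ∃ j, n - k = j + 1 := ⟨n - k - 1, by omega⟩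
      rw [hj, derivative_hermitePoly, show n - (k+1) = j from by omega, ← mul_assoc, ← C_mul]
      congr 1
      have h2 : n.choose (k+1) * (k+1) = n.choose k * (n - k) := Nat.choose_succ_right_eq n k
      rw [hj] at h2
      have key : 2 ^ k * k.factorial * n.choose k * (2 * (j+1)) =
          2 ^ (k+1) * (k+1).factorial * n.choose (k+1) := by
        calc 2 ^ k * k.factorial * n.choose k * (2 * (j+1))
            = 2 ^ (k+1) * k.factorial * (n.choose k * (j + 1)) := by ring
          _ = 2 ^ (k+1) * k.factorial * (n.choose (k+1) * (k+1)) := by rw [h2]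
          _ = 2 ^ (k+1) * (k+1).factorial * n.choose (k+1) := by rw [Nat.factorial_succ]; ring
      norm_cast
      rw [key]

def Hc (n : ℕ) : Polynomial ℂ := (hermitePoly n).map (algebraMap ℝ ℂ)

def Ac (n : ℕ) : Polynomial ℂ := C (Complex.I ^ n) * (Hc n).comp (C Complex.I * X)

lemma Hc_zero : Hc 0 = 1 := by rw [Hc, hermitePoly_zero, Polynomial.map_one]

lemma Ac_zero : Ac 0 = 1 := by simp [Ac, Hc_zero]

lemma Hc_rec (n : ℕ) : Hc (n+1) = C 2 * X * Hc n - derivative (Hc n) := by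
  rw [Hc, hermitePoly_rec n, Polynomial.map_sub, Polynomial.map_mul, Polynomial.map_mul,
    Polynomial.map_C, Polynomial.map_X, ← derivative_map, Hc]
  norm_num

lemma Ac_rec (n : ℕ) : Ac (n+1) = -(C 2 * X * Ac n) - derivative (Ac n) := by
  have hd : derivative (Ac n) = C Complex.I * (C (Complex.I ^ n) *
      (derivative (Hc n)).comp (C Complex.I * X)) := by
    rw [Ac, derivative_C_mul, derivative_comp, derivative_mul, derivative_C, derivative_X]
    ring
  have hI2 : (C Complex.I : Polynomial ℂ) * C Complex.I = -1 := by
    rw [← C_mul, Complex.I_mul_I]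
    simp
  rw [Ac, Hc_rec n, sub_comp, mul_comp, mul_comp, C_comp, X_comp, hd, Ac, pow_succ, C_mul]
  linear_combination (C 2 * X * (Hc n).comp (C Complex.I * X) * C (Complex.I ^ n)) * hI2

def Sc (N : ℕ) : Polynomial ℂ :=
  ∑ m ∈ Finset.range (N+1), C ((N.choose m : ℂ)) * Ac m * Hc (N - m)

lemma Sc_succ (N : ℕ) : Sc (N+1) = - derivative (Sc N) := by
  have hsplit : Sc (N+1) =
      (∑ m ∈ Finset.range (N+1), C ((N.choose m : ℂ)) * Ac m * Hc (N + 1 - m)) +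
      (∑ m ∈ Finset.range (N+1), C ((N.choose m : ℂ)) * Ac (m+1) * Hc (N - m)) := by
    rw [Sc, Finset.sum_range_succ']
    have f0 : C (((N+1).choose 0 : ℂ)) * Ac 0 * Hc (N + 1 - 0) = Hc (N+1) := by
      simp [Ac_zero]
    rw [f0]
    have fm : ∀ m, C (((N+1).choose (m+1) : ℂ)) * Ac (m+1) * Hc (N + 1 - (m+1)) =
        C ((N.choose m : ℂ)) * Ac (m+1) * Hc (N - m) +
        C ((N.choose (m+1) : ℂ)) * Ac (m+1) * Hc (N - m) := by
      intro m
      rw [Nat.choose_succ_succ, Nat.succ_sub_succ]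
      push_cast
      rw [C_add]
      ring
    rw [Finset.sum_congr rfl (fun m _ => fm m), Finset.sum_add_distrib]
    have hU : (∑ m ∈ Finset.range (N+1), C ((N.choose (m+1) : ℂ)) * Ac (m+1) * Hc (N - m)) =
        (∑ m ∈ Finset.range (N+1), C ((N.choose m : ℂ)) * Ac m * Hc (N + 1 - m)) - Hc (N+1) := by
      have := Finset.sum_range_succ' (fun m => C ((N.choose m : ℂ)) * Ac m * Hc (N + 1 - m)) (N+1)
      -- this : ∑_{range(N+2)} g = ∑_{m∈range(N+1)} g (m+1) + g 0
      have hg0 : C ((N.choose 0 : ℂ)) * Ac 0 * Hc (N + 1 - 0) = Hc (N+1) := by simp [Ac_zero]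
      have htop : ∑ m ∈ Finset.range (N+1+1), C ((N.choose m : ℂ)) * Ac m * Hc (N + 1 - m) =
          ∑ m ∈ Finset.range (N+1), C ((N.choose m : ℂ)) * Ac m * Hc (N + 1 - m) := by
        rw [Finset.sum_range_succ, Nat.choose_succ_self]
        simp
      rw [htop, hg0] at this
      have heq : ∀ m, C ((N.choose (m+1) : ℂ)) * Ac (m+1) * Hc (N + 1 - (m+1)) =
          C ((N.choose (m+1) : ℂ)) * Ac (m+1) * Hc (N - m) := by
        intro m
        rw [Nat.succ_sub_succ]
      rw [Finset.sum_congr rfl (fun m _ => heq m)] at this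
      rw [this]
      ring
    rw [hU]
    ring
  rw [hsplit, Sc, derivative_sum, ← Finset.sum_add_distrib, ← Finset.sum_neg_distrib]
  apply Finset.sum_congr rfl
  intro m hm
  rw [Finset.mem_range] at hm
  have hsub : N + 1 - m = (N - m) + 1 := by omega
  rw [hsub, Hc_rec (N - m), Ac_rec m, derivative_mul, derivative_mul, derivative_C]
  ring

lemma Sc_eq (N : ℕ) : Sc N = if N = 0 then 1 else 0 := by
  induction N with
  | zero => simp [Sc, Ac_zero, Hc_zero]
  | succ N ih =>
      rw [Sc_succ, ih]
      by_cases h : N = 0 <;> simp [h]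

def Rc (γ : ℕ → ℝ) (n : ℕ) : Polynomial ℂ :=
  Polynomial.C ((1 : ℂ) / (n.factorial * 2 ^ n)) *
    ∑ k ∈ Finset.range (n + 1),
      Polynomial.C ((n.choose k : ℂ) * (γ k : ℂ) * Complex.I ^ (n - k)) *
        ((Hc (n - k)).comp (Polynomial.C Complex.I * Polynomial.X)) * Hc k

lemma Rc_system (γ : ℕ → ℝ) (n : ℕ) :
    ∑ k ∈ Finset.range (n+1),
      C (((2^k * k.factorial * n.choose k : ℕ) : ℂ)) * Rc γ k * Hc (n - k)
      = C ((γ n : ℂ)) * Hc n := by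
  have hfne : ∀ m : ℕ, ((m.factorial : ℂ)) ≠ 0 :=
    fun m => Nat.cast_ne_zero.mpr m.factorial_ne_zero
  have hterm : ∀ k ∈ Finset.range (n+1),
      C (((2^k * k.factorial * n.choose k : ℕ) : ℂ)) * Rc γ k * Hc (n - k) =
      ∑ j ∈ Finset.range (n+1),
        C ((n.choose k : ℂ) * (k.choose j : ℂ) * (γ j : ℂ) * Complex.I ^ (k - j)) *
          ((Hc (k - j)).comp (C Complex.I * X)) * Hc j * Hc (n - k) := by
    intro k hk
    rw [Finset.mem_range] at hk
    have h2 : ((2:ℂ))^k ≠ 0 := pow_ne_zero _ two_ne_zero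
    have hA : (((2^k * k.factorial * n.choose k : ℕ) : ℂ)) * ((1:ℂ) / (k.factorial * 2 ^ k)) =
        ((n.choose k : ℂ)) := by
      calc (((2^k * k.factorial * n.choose k : ℕ) : ℂ)) * ((1:ℂ) / (k.factorial * 2 ^ k))
          = (n.choose k : ℂ) * (((k.factorial : ℂ) * 2^k) * (1/((k.factorial : ℂ) * 2^k))) := by
            push_cast
            ring
        _ = ((n.choose k : ℂ)) := by
            rw [mul_one_div, div_self (mul_ne_zero (hfne k) h2), mul_one]
    rw [Rc, ← mul_assoc, ← C_mul, hA, Finset.mul_sum, Finset.sum_mul]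
    rw [Finset.sum_subset (Finset.range_subset_range.mpr (by omega : k + 1 ≤ n + 1))]
    · apply Finset.sum_congr rfl
      intro j hj
      simp only [C_mul]
      ring
    · intro j hjn hjk
      rw [Finset.mem_range, not_lt] at hjk
      have hz : k.choose j = 0 := Nat.choose_eq_zero_of_lt (by omega)
      rw [hz]
      simp
  rw [Finset.sum_congr rfl hterm, Finset.sum_comm]
  have hinner : ∀ j ∈ Finset.range (n+1),
      (∑ k ∈ Finset.range (n+1),
        C ((n.choose k : ℂ) * (k.choose j : ℂ) * (γ j : ℂ) * Complex.I ^ (k - j)) *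
          ((Hc (k - j)).comp (C Complex.I * X)) * Hc j * Hc (n - k)) =
      C ((n.choose j : ℂ) * (γ j : ℂ)) * Hc j * Sc (n - j) := by
    intro j hj
    rw [Finset.mem_range] at hj
    rw [Finset.range_eq_Ico, ← Finset.sum_Ico_consecutive _ (Nat.zero_le j) (by omega : j ≤ n+1)]
    have hzero : ∑ k ∈ Finset.Ico 0 j,
        C ((n.choose k : ℂ) * (k.choose j : ℂ) * (γ j : ℂ) * Complex.I ^ (k - j)) *
          ((Hc (k - j)).comp (C Complex.I * X)) * Hc j * Hc (n - k) = 0 := by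
      apply Finset.sum_eq_zero
      intro k hkm
      rw [Finset.mem_Ico] at hkm
      have hz : k.choose j = 0 := Nat.choose_eq_zero_of_lt (by omega)
      rw [hz]
      simp
    rw [hzero, zero_add, Finset.sum_Ico_eq_sum_range]
    rw [Sc, Finset.mul_sum]
    have hlen : n + 1 - j = (n - j) + 1 := by omega
    rw [hlen]
    apply Finset.sum_congr rfl
    intro i hi
    rw [Finset.mem_range] at hi
    have e1 : j + i - j = i := by omega
    have e2 : n - (j + i) = n - j - i := by omega
    have e3 : (n.choose (j + i)) * ((j+i).choose j) = n.choose j * ((n-j).choose i) := by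
      have h := Nat.choose_mul (n := n) (show j ≤ j + i by omega)
      rw [h, e1]
    have e4 : ((n.choose (j+i) : ℂ)) * ((j+i).choose j : ℂ) =
        ((n.choose j : ℂ)) * (((n-j).choose i : ℂ)) := by exact_mod_cast e3
    rw [e1, e2, Ac]
    have e5 : ((n.choose (j+i) : ℂ)) * ((j+i).choose j : ℂ) * ((γ j : ℂ)) * Complex.I ^ i =
        ((n.choose j : ℂ)) * ((γ j : ℂ)) * ((((n-j).choose i : ℂ)) * Complex.I ^ i) := by
      rw [e4]; ring
    rw [e5]
    simp only [C_mul]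
    ring
  rw [Finset.sum_congr rfl hinner]
  rw [Finset.sum_eq_single n]
  · rw [Nat.sub_self, Sc_eq, if_pos rfl, mul_one, Nat.choose_self]
    norm_num
  · intro j hjr hjn
    rw [Finset.mem_range] at hjr
    rw [Sc_eq, if_neg (by omega), mul_zero]
  · intro h
    exact absurd (Finset.self_mem_range_succ n) h

/-- the complex formula for the differential coefficients of a Hermite
diagonal differential operator. -/
theorem stmt_9 (γ : ℕ → ℝ)
    (T : Polynomial ℝ →ₗ[ℝ] Polynomial ℝ)
    (hT : ∀ n, T (hermitePoly n) = γ n • hermitePoly n)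
    (Q : ℕ → Polynomial ℝ)
    (hQ : ∀ p : Polynomial ℝ,
      T p = ∑ k ∈ Finset.range (p.natDegree + 1), Q k * (Polynomial.derivative^[k] p)) :
    ∀ n : ℕ, (Q n).map (algebraMap ℝ ℂ) =
      Polynomial.C ((1 : ℂ) / (n.factorial * 2 ^ n)) *
        ∑ k ∈ Finset.range (n + 1),
          Polynomial.C ((n.choose k : ℂ) * (γ k : ℂ) * Complex.I ^ (n - k)) *
            (((hermitePoly (n - k)).map (algebraMap ℝ ℂ)).comp
              (Polynomial.C Complex.I * Polynomial.X)) *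
            ((hermitePoly k).map (algebraMap ℝ ℂ)) := by
  have keyR : ∀ m : ℕ, ∑ k ∈ Finset.range (m+1),
      C (((2^k * k.factorial * m.choose k : ℕ) : ℝ)) * Q k * hermitePoly (m - k)
      = C (γ m) * hermitePoly m := by
    intro m
    have h := hQ (hermitePoly m)
    rw [natDegree_hermitePoly] at h
    rw [show C (γ m) * hermitePoly m = γ m • hermitePoly m from (smul_eq_C_mul _).symm,
      ← hT m, h]
    apply Finset.sum_congr rfl
    intro k hk
    rw [Finset.mem_range] at hk
    rw [iterDeriv_hermitePoly m k (by omega)]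
    ring
  have key : ∀ m : ℕ, ∑ k ∈ Finset.range (m+1),
      C (((2^k * k.factorial * m.choose k : ℕ) : ℂ)) * ((Q k).map (algebraMap ℝ ℂ)) * Hc (m - k)
      = C ((γ m : ℂ)) * Hc m := by
    intro m
    have h := congrArg (Polynomial.map (algebraMap ℝ ℂ)) (keyR m)
    simp only [Polynomial.map_sum, Polynomial.map_mul, Polynomial.map_C,
      Complex.coe_algebraMap] at h
    simp only [Hc]
    push_cast at h ⊢
    exact h
  intro n
  induction n using Nat.strong_induction_on with
  | _ n ih =>
    show (Q n).map (algebraMap ℝ ℂ) = Rc γ n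
    have h1 := key n
    have h2 := Rc_system γ n
    rw [Finset.sum_range_succ] at h1 h2
    have heq : ∀ k ∈ Finset.range n,
        C (((2^k * k.factorial * n.choose k : ℕ) : ℂ)) * ((Q k).map (algebraMap ℝ ℂ)) * Hc (n - k)
        = C (((2^k * k.factorial * n.choose k : ℕ) : ℂ)) * Rc γ k * Hc (n - k) := by
      intro k hk
      rw [Finset.mem_range] at hk
      have hik : (Q k).map (algebraMap ℝ ℂ) = Rc γ k := ih k hk
      rw [hik]
    rw [Finset.sum_congr rfl heq] at h1
    have h3 := add_left_cancel (h1.trans h2.symm)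
    rw [Nat.sub_self, Hc_zero, mul_one, mul_one] at h3
    have hcn : (((2^n * n.factorial * n.choose n : ℕ) : ℂ)) ≠ 0 := by
      rw [Nat.cast_ne_zero, Nat.choose_self, mul_one]
      exact Nat.mul_ne_zero (pow_ne_zero _ two_ne_zero) n.factorial_ne_zero
    exact mul_left_cancel₀ ((C_ne_zero).mpr hcn) h3
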